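/- Let G be a locally compact Polish group with left Haar measure μ. Assume the following rectangle property: for every F_σ set H ⊆ G × G, if H contains a rectangle C × D that is non-null (i.e. both C and D have positive outer μ-measure), then H contains a measurable rectangle A × B with (μ × μ)(A × B) > 0. Then every meager subgroup of G is null with respect to μ. -/

import Mathlib

open MeasureTheory

/-- The rectangle property for a measure `μ`: every `F_σ` subset of the square that
contains a rectangle whose sides both have positive outer measure contains a measurable
rectangle of positive product measure. -/
def RectProp {G : Type*} [TopologicalSpace G] [MeasurableSpace G] (μ : Measure G) : Prop :=
  ∀ H : Set (G × G),
    (∃ F : ℕ → Set (G × G), (∀ n, IsClosed (F n)) ∧ H = ⋃ n, F n) →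
    ∀ C D : Set G, C ×ˢ D ⊆ H → μ C ≠ 0 → μ D ≠ 0 →
      ∃ A B : Set G, NullMeasurableSet A μ ∧ NullMeasurableSet B μ ∧ A ×ˢ B ⊆ H ∧
        0 < (μ.prod μ) (A ×ˢ B)

open Set Filter Pointwise Topology

/-- If a locally compact Polish group with left Haar measure `μ`
satisfies the rectangle property, then every meager subgroup of it is `μ`-null. -/
theorem stmt_14 {G : Type*} [Group G] [TopologicalSpace G] [IsTopologicalGroup G]
    [PolishSpace G] [LocallyCompactSpace G]
    [MeasurableSpace G] [BorelSpace G]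
    (μ : Measure G) [μ.IsHaarMeasure] [μ.InnerRegular]
    (hrect : RectProp μ)
    (S : Subgroup G) (hS : IsMeagre (S : Set G)) :
    μ (S : Set G) = 0 := by
  by_contra hμS
  -- Extract a meager `F_σ` superset `M` of `S` made of closed nowhere dense sets.
  obtain ⟨𝒮, h𝒮nd, h𝒮c, hSsub⟩ := isMeagre_iff_countable_union_isNowhereDense.mp hS
  obtain ⟨f, hf⟩ := (h𝒮c.insert ∅).exists_eq_range (insert_nonempty _ _)
  have hfnd : ∀ n, IsNowhereDense (f n) := by
    intro n
    have hmem : f n ∈ insert (∅ : Set G) 𝒮 := hf ▸ mem_range_self n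
    rcases hmem with h | h
    · rw [h]; exact isNowhereDense_empty
    · exact h𝒮nd _ h
  set C : ℕ → Set G := fun n => closure (f n) with hCdef
  set M : Set G := ⋃ n, C n with hMdef
  have hCclosed : ∀ n, IsClosed (C n) := fun n => isClosed_closure
  have hSM : (S : Set G) ⊆ M := by
    refine hSsub.trans (fun x hx => ?_)
    obtain ⟨t, ht, hxt⟩ := hx
    have : t ∈ insert (∅ : Set G) 𝒮 := Set.mem_insert_of_mem _ ht
    rw [hf] at this
    obtain ⟨n, rfl⟩ := this
    exact mem_iUnion.mpr ⟨n, subset_closure hxt⟩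
  have hMmeagre : IsMeagre M := by
    refine isMeagre_iUnion (fun n => ?_)
    exact isMeagre_iff_countable_union_isNowhereDense.mpr
      ⟨{C n}, by simpa using (hfnd n).closure, countable_singleton _, by simp⟩
  have hMint : interior M = ∅ := by
    rw [interior_eq_empty_iff_dense_compl]
    exact dense_of_mem_residual hMmeagre
  -- The `F_σ` set `H`.
  set H : Set (G × G) := (fun p : G × G => p.2 * p.1⁻¹) ⁻¹' M with hHdef
  have hcont : Continuous (fun p : G × G => p.2 * p.1⁻¹) :=
    continuous_snd.mul continuous_fst.inv
  have hHF : ∃ F : ℕ → Set (G × G), (∀ n, IsClosed (F n)) ∧ H = ⋃ n, F n :=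
    ⟨fun n => (fun p : G × G => p.2 * p.1⁻¹) ⁻¹' (C n),
      fun n => (hCclosed n).preimage hcont, by rw [hHdef, hMdef, preimage_iUnion]⟩
  have hSS : (S : Set G) ×ˢ (S : Set G) ⊆ H := by
    rintro ⟨x, y⟩ ⟨hx, hy⟩
    exact hSM (S.mul_mem hy (S.inv_mem hx))
  obtain ⟨A, B, hA, hB, hAB, hpos⟩ := hrect H hHF _ _ hSS hμS hμS
  rw [Measure.prod_prod] at hpos
  have hApos : μ A ≠ 0 := fun h => by simp [h] at hpos
  have hBpos : μ B ≠ 0 := fun h => by simp [h] at hpos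
  obtain ⟨A', hA'sub, hA'm, hA'ae⟩ := hA.exists_measurable_subset_ae_eq
  obtain ⟨B', hB'sub, hB'm, hB'ae⟩ := hB.exists_measurable_subset_ae_eq
  have hA' : μ A' ≠ 0 := by rw [measure_congr hA'ae]; exact hApos
  have hB' : μ B' ≠ 0 := by rw [measure_congr hB'ae]; exact hBpos
  have key : ∀ a ∈ A', ∀ b ∈ B', b * a⁻¹ ∈ M := fun a ha b hb =>
    hAB (Set.mk_mem_prod (hA'sub ha) (hB'sub hb))
  -- Find a translate `g • A'` intersecting `B'` in positive measure.
  have hexg : ∃ g : G, μ ((g • A') ∩ B') ≠ 0 := by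
    by_contra hcon
    push_neg at hcon
    set W : Set (G × G) := {p | p.1⁻¹ * p.2 ∈ A' ∧ p.2 ∈ B'} with hWdef
    have hWm : MeasurableSet W :=
      ((measurable_fst.inv.mul measurable_snd) hA'm).inter (measurable_snd hB'm)
    have h1 : (μ.prod μ) W = 0 := by
      rw [Measure.prod_apply hWm]
      have heq : ∀ g : G, μ (Prod.mk g ⁻¹' W) = 0 := by
        intro g
        have : Prod.mk g ⁻¹' W = (g • A') ∩ B' := by
          ext x
          simp [hWdef, Set.mem_smul_set_iff_inv_smul_mem, smul_eq_mul]
        rw [this]; exact hcon g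
      simp [heq]
    have h2 : (μ.prod μ) W = μ (A'⁻¹) * μ B' := by
      rw [Measure.prod_apply_symm hWm]
      have heq : ∀ x : G, μ ((fun g => (g, x)) ⁻¹' W)
          = B'.indicator (fun _ => μ (A'⁻¹)) x := by
        intro x
        by_cases hx : x ∈ B'
        · have hset : (fun g => (g, x)) ⁻¹' W = x • A'⁻¹ := by
            ext g
            simp only [hWdef, mem_preimage, mem_setOf_eq,
              Set.mem_smul_set_iff_inv_smul_mem, smul_eq_mul, Set.mem_inv,
              mul_inv_rev, inv_inv]
            exact ⟨fun h => h.1, fun h => ⟨h, hx⟩⟩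
          rw [hset, measure_smul, Set.indicator_of_mem hx]
        · have hset : (fun g => (g, x)) ⁻¹' W = ∅ := by
            ext g; simp [hWdef, hx]
          rw [hset, Set.indicator_of_notMem hx]; simp
      rw [lintegral_congr heq, lintegral_indicator hB'm, setLIntegral_const]
    rw [h1] at h2
    rcases mul_eq_zero.mp h2.symm with h | h
    · exact hA' ((measure_inv_null μ).mp h)
    · exact hB' h
  obtain ⟨g, hg⟩ := hexg
  set E : Set G := (g • A') ∩ B' with hEdef
  have hEm : MeasurableSet E := (hA'm.const_smul g).inter hB'm
  have hnhds : E / E ∈ 𝓝 (1 : G) :=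
    Measure.div_mem_nhds_one_of_haar_pos μ E hEm (pos_iff_ne_zero.mpr hg)
  have hsubset : E / E ⊆ (fun x => x * g) ⁻¹' M := by
    rintro z hz
    rw [Set.mem_div] at hz
    obtain ⟨u, hu, v, hv, rfl⟩ := hz
    obtain ⟨a, ha, rfl⟩ := hv.1
    have hu' : u ∈ B' := hu.2
    have h2 : u / (g • a) * g = u * a⁻¹ := by
      simp [div_eq_mul_inv, smul_eq_mul, mul_inv_rev, mul_assoc]
    rw [Set.mem_preimage, h2]
    exact key a ha u hu'
  have hMnhds : M ∈ 𝓝 g := by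
    rw [← map_mul_right_nhds_one g, mem_map]
    exact mem_of_superset hnhds hsubset
  have : g ∈ interior M := mem_interior_iff_mem_nhds.mpr hMnhds
  rw [hMint] at this
  exact this
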